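/- Let ζ > 1, let ε > 0, let β ∈ (0, 1) satisfy β(ζ − 1) > 1, and let K > 0. Let (Λ_i)_{i∈ℤ} be a family of stochastic processes on a common probability space (Ω, P), each with almost surely nondecreasing paths and Λ_i(0) = 0, satisfying condition (DIFF) uniformly with exponent ζ. Then P( there exist i ∈ ℤ with |i| ≤ K·T and a real s ∈ [T^β, T] such that |Λ_i(s) − s| > s^{1/2 + ε} ) tends to 0 as the real parameter T tends to infinity. -/

import Mathlib

open MeasureTheory Filter
open scoped ENNReal
set_option maxHeartbeats 1000000

/-- With high probability, all environment processes attached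
to sites within distance `K·T` of the origin stay within their diffusive
deviation bands on the whole time window `[T^β, T]`, provided
`β(ζ − 1) > 1` and the family satisfies (DIFF) uniformly with exponent
`ζ > 1`. -/
theorem whp_no_deviation_on_window
    {Ω : Type*} [MeasurableSpace Ω] (P : Measure Ω) [IsProbabilityMeasure P]
    (ζ : ℝ) (hζ : 1 < ζ) (ε : ℝ) (hε : 0 < ε)
    (β : ℝ) (hβ0 : 0 < β) (hβ1 : β < 1) (hβζ : 1 < β * (ζ - 1))
    (K : ℝ) (hK : 0 < K)
    (Λ : ℤ → ℝ → Ω → ℝ)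
    (hmono : ∀ i : ℤ, ∀ᵐ ω ∂P, MonotoneOn (fun t => Λ i t ω) (Set.Ici (0 : ℝ)))
    (hzero : ∀ i : ℤ, ∀ᵐ ω ∂P, Λ i 0 ω = 0)
    (hDIFF : ∀ ε' : ℝ, 0 < ε' → ∃ c : ℝ, ∀ a b : ℝ, 0 ≤ a → a ≤ b → ∀ i : ℤ,
      P {ω | |Λ i b ω - Λ i a ω - (b - a)| > (b - a) ^ ((1 : ℝ) / 2 + ε')}
        ≤ ENNReal.ofReal (c * (b - a) ^ (-ζ))) :
    Tendsto
      (fun T : ℝ =>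
        P {ω | ∃ i : ℤ, (|i| : ℝ) ≤ K * T ∧
            ∃ s : ℝ, T ^ β ≤ s ∧ s ≤ T ∧ |Λ i s ω - s| > s ^ ((1 : ℝ) / 2 + ε)})
      atTop (nhds 0) := by
  obtain ⟨c, hc⟩ := hDIFF (ε/2) (by linarith)
  set c' : ℝ := max c 0 with hc'def
  have hc'0 : (0:ℝ) ≤ c' := le_max_right _ _
  have hinvβ : 0 < 1/β := by positivity
  have hζβ : 1/β < ζ - 1 := (div_lt_iff₀ hβ0).mpr (by linarith [mul_comm β (ζ-1)])
  set ρ : ℝ := (1/β + (ζ-1))/2 with hρdef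
  have hρ1 : 1/β < ρ := by rw [hρdef]; linarith
  have hρ2 : ρ < ζ - 1 := by rw [hρdef]; linarith
  have hρ0 : 0 < ρ := hinvβ.trans hρ1
  have hβρ : 1 < β * ρ := by
    have h := (div_lt_iff₀ hβ0).mp hρ1
    linarith [mul_comm ρ β]
  set p : ℝ := ζ - ρ with hpdef
  have hp1 : 1 < p := by rw [hpdef]; linarith
  have hsum : Summable (fun k : ℕ => ((k:ℝ)+1) ^ (-p)) := by
    have h0 : Summable (fun n : ℕ => (n:ℝ) ^ (-p)) := Real.summable_nat_rpow.mpr (by linarith)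
    have h1 := (summable_nat_add_iff 1).mpr h0
    refine h1.congr fun n => ?_
    push_cast
    norm_num
  set Z : ℝ := ∑' k : ℕ, ((k:ℝ)+1) ^ (-p) with hZdef
  have hZ0 : 0 ≤ Z := tsum_nonneg fun k => Real.rpow_nonneg (by positivity) _
  set e2 : ℝ := (1:ℝ)/2 + ε/2 with he2def
  have he20 : 0 ≤ e2 := by rw [he2def]; linarith
  set S₀ : ℝ := max 1 ((2 ^ e2 + 1) ^ (2/ε)) with hS₀def
  have hana : ∀ s : ℝ, S₀ ≤ s → (s+1) ^ e2 + 1 ≤ s ^ ((1:ℝ)/2 + ε) := by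
    intro s hs
    have hs1 : (1:ℝ) ≤ s := le_trans (le_max_left _ _) hs
    have hs0 : (0:ℝ) < s := lt_of_lt_of_le one_pos hs1
    have hb0 : (0:ℝ) < 2 ^ e2 + 1 := by positivity
    have h1 : (s+1) ^ e2 ≤ (2*s) ^ e2 :=
      Real.rpow_le_rpow (by linarith) (by linarith) he20
    have h2 : (2*s) ^ e2 = 2 ^ e2 * s ^ e2 := Real.mul_rpow (by norm_num) hs0.le
    have h3 : (1:ℝ) ≤ s ^ e2 := by
      calc (1:ℝ) = 1 ^ e2 := (Real.one_rpow e2).symm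
        _ ≤ s ^ e2 := Real.rpow_le_rpow zero_le_one hs1 he20
    have h4 : 2 ^ e2 + 1 ≤ s ^ (ε/2) := by
      have hx : ((2 ^ e2 + 1) ^ (2/ε)) ^ (ε/2) ≤ s ^ (ε/2) :=
        Real.rpow_le_rpow (by positivity) (le_trans (le_max_right _ _) hs) (by linarith)
      rwa [← Real.rpow_mul hb0.le, show (2/ε) * (ε/2) = 1 by field_simp, Real.rpow_one] at hx
    have h5 : s ^ (ε/2) * s ^ e2 = s ^ ((1:ℝ)/2 + ε) := by
      rw [← Real.rpow_add hs0]
      congr 1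
      rw [he2def]; ring
    have h6 : (2 ^ e2 + 1) * s ^ e2 ≤ s ^ (ε/2) * s ^ e2 :=
      mul_le_mul_of_nonneg_right h4 (Real.rpow_nonneg hs0.le e2)
    nlinarith [h1, h2, h3, h5, h6]
  have hev : ∀ᶠ T in atTop,
      P {ω | ∃ i : ℤ, (|i| : ℝ) ≤ K * T ∧
            ∃ s : ℝ, T ^ β ≤ s ∧ s ≤ T ∧ |Λ i s ω - s| > s ^ ((1 : ℝ) / 2 + ε)}
        ≤ ENNReal.ofReal (c' * Z * (2*K * T^(1-β*ρ) + 3 * T^(-(β*ρ)))) := by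
    filter_upwards [eventually_ge_atTop (1:ℝ),
      (tendsto_rpow_atTop hβ0).eventually (eventually_ge_atTop S₀)] with T hT1 hTS
    have hT0 : (0:ℝ) < T := lt_of_lt_of_le one_pos hT1
    set a : ℝ := T ^ β with hadef
    have haS : S₀ ≤ a := hTS
    have ha1 : (1:ℝ) ≤ a := le_trans (le_max_left _ _) haS
    have ha0 : (0:ℝ) < a := lt_of_lt_of_le one_pos ha1
    set M : ℕ := ⌈K*T⌉₊ with hMdef
    set N : ℕ := ⌈T⌉₊ + 2 with hNdef
    set I : Finset ℤ := Finset.Icc (-(M:ℤ)) (M:ℤ) with hIdef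
    set A : ℤ → ℕ → Set Ω := fun i k =>
      {ω | |Λ i (a + (k:ℝ)) ω - Λ i 0 ω - (a + (k:ℝ) - 0)| > (a + (k:ℝ) - 0) ^ e2} with hAdef
    set G : Set Ω := {ω | ∀ i : ℤ,
      MonotoneOn (fun t => Λ i t ω) (Set.Ici (0:ℝ)) ∧ Λ i 0 ω = 0} with hGdef
    have hGnull : P Gᶜ = 0 := by
      have hae : ∀ᵐ ω ∂P, ∀ i : ℤ,
          MonotoneOn (fun t => Λ i t ω) (Set.Ici (0:ℝ)) ∧ Λ i 0 ω = 0 :=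
        ae_all_iff.mpr fun i => (hmono i).and (hzero i)
      rw [ae_iff] at hae
      simpa [hGdef, Set.compl_setOf] using hae
    have hincl : {ω | ∃ i : ℤ, (|i| : ℝ) ≤ K * T ∧
          ∃ s : ℝ, a ≤ s ∧ s ≤ T ∧ |Λ i s ω - s| > s ^ ((1 : ℝ) / 2 + ε)}
        ⊆ Gᶜ ∪ ⋃ i ∈ I, ⋃ k ∈ Finset.range N, A i k := by
      intro ω hω
      obtain ⟨i, hi, s, hsa, hsT, hdev⟩ := hω
      by_cases hωG : ω ∈ G
      · right
        have hmω : MonotoneOn (fun t => Λ i t ω) (Set.Ici (0:ℝ)) := (hωG i).1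
        have hzω : Λ i 0 ω = 0 := (hωG i).2
        have hs1 : (1:ℝ) ≤ s := le_trans ha1 hsa
        have hs0 : (0:ℝ) < s := lt_of_lt_of_le one_pos hs1
        have hiI : i ∈ I := by
          rw [hIdef, Finset.mem_Icc]
          have h1 : (|i|:ℝ) ≤ (M:ℝ) := le_trans hi (Nat.le_ceil _)
          have h2 : |i| ≤ (M:ℤ) := by exact_mod_cast h1
          exact abs_le.mp h2
        set k : ℕ := ⌊s - a⌋₊ with hkdef
        have hk0 : (0:ℝ) ≤ (k:ℝ) := Nat.cast_nonneg k
        have hk1 : a + (k:ℝ) ≤ s := by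
          have := Nat.floor_le (show (0:ℝ) ≤ s - a by linarith)
          linarith
        have hk2 : s ≤ a + ((k:ℝ)+1) := by
          have := Nat.lt_floor_add_one (s - a)
          linarith [this.le]
        have hkN : k + 1 < N := by
          have h1 : (k:ℝ) ≤ (⌈T⌉₊:ℝ) := le_trans (by linarith) (Nat.le_ceil T)
          have h2 : k ≤ ⌈T⌉₊ := by exact_mod_cast h1
          omega
        by_cases hA1 : ω ∈ A i k
        · exact Set.mem_biUnion hiI (Set.mem_biUnion (Finset.mem_range.mpr (by omega)) hA1)
        by_cases hA2 : ω ∈ A i (k+1)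
        · exact Set.mem_biUnion hiI (Set.mem_biUnion (Finset.mem_range.mpr hkN) hA2)
        exfalso
        simp only [hAdef, Set.mem_setOf_eq, not_lt, hzω, sub_zero] at hA1 hA2
        push_cast at hA2
        have habs1 := abs_le.mp hA1
        have habs2 := abs_le.mp hA2
        have htk0 : (0:ℝ) ≤ a + (k:ℝ) := by linarith
        have hmono1 : Λ i (a + (k:ℝ)) ω ≤ Λ i s ω :=
          hmω (Set.mem_Ici.mpr htk0) (Set.mem_Ici.mpr hs0.le) hk1
        have hmono2 : Λ i s ω ≤ Λ i (a + ((k:ℝ)+1)) ω :=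
          hmω (Set.mem_Ici.mpr hs0.le) (Set.mem_Ici.mpr (by linarith)) hk2
        have hr1 : (a + (k:ℝ)) ^ e2 ≤ (s+1) ^ e2 :=
          Real.rpow_le_rpow htk0 (by linarith) he20
        have hr2 : (a + ((k:ℝ)+1)) ^ e2 ≤ (s+1) ^ e2 :=
          Real.rpow_le_rpow (by linarith) (by linarith) he20
        have hfin : |Λ i s ω - s| ≤ (s+1) ^ e2 + 1 := by
          rw [abs_le]
          constructor
          · have hl := habs1.1
            linarith
          · have hu := habs2.2
            linarith
        have hfin2 := hana s (le_trans haS hsa)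
        exact absurd hdev (not_lt.mpr (hfin.trans hfin2))
      · left; exact hωG
    have hAk : ∀ (i : ℤ), ∀ k ∈ Finset.range N,
        P (A i k) ≤ ENNReal.ofReal (c' * (a ^ (-ρ) * ((k:ℝ)+1) ^ (-p))) := by
      intro i k _
      have hk0 : (0:ℝ) ≤ (k:ℝ) := Nat.cast_nonneg k
      have hx1 : (1:ℝ) ≤ a + (k:ℝ) := by linarith
      have hx0 : (0:ℝ) < a + (k:ℝ) := by linarith
      have hbase := hc 0 (a + (k:ℝ)) le_rfl (by linarith) i
      refine le_trans hbase (ENNReal.ofReal_le_ofReal ?_)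
      rw [sub_zero]
      have key : (a + (k:ℝ)) ^ (-ζ) ≤ a ^ (-ρ) * ((k:ℝ)+1) ^ (-p) := by
        rw [Real.rpow_neg hx0.le, Real.rpow_neg ha0.le,
          Real.rpow_neg (by positivity : (0:ℝ) ≤ (k:ℝ)+1), ← mul_inv]
        have hpos : (0:ℝ) < a ^ ρ * ((k:ℝ)+1) ^ p := by positivity
        apply inv_anti₀ hpos
        calc a ^ ρ * ((k:ℝ)+1) ^ p
            ≤ (a + (k:ℝ)) ^ ρ * (a + (k:ℝ)) ^ p := by
              apply mul_le_mul (Real.rpow_le_rpow ha0.le (by linarith) hρ0.le)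
                (Real.rpow_le_rpow (by positivity) (by linarith) (by linarith))
                (by positivity) (by positivity)
          _ = (a + (k:ℝ)) ^ (ρ + p) := (Real.rpow_add hx0 _ _).symm
          _ = (a + (k:ℝ)) ^ ζ := by
              congr 1
              rw [hpdef]; ring
      calc c * (a + (k:ℝ)) ^ (-ζ) ≤ c' * (a + (k:ℝ)) ^ (-ζ) :=
            mul_le_mul_of_nonneg_right (le_max_left _ _) (Real.rpow_nonneg hx0.le _)
        _ ≤ c' * (a ^ (-ρ) * ((k:ℝ)+1) ^ (-p)) := mul_le_mul_of_nonneg_left key hc'0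
    have hinner : ∀ i ∈ I, ∑ k ∈ Finset.range N, P (A i k)
        ≤ ENNReal.ofReal (c' * a ^ (-ρ) * Z) := by
      intro i _
      calc ∑ k ∈ Finset.range N, P (A i k)
          ≤ ∑ k ∈ Finset.range N, ENNReal.ofReal (c' * (a ^ (-ρ) * ((k:ℝ)+1) ^ (-p))) :=
            Finset.sum_le_sum (hAk i)
        _ = ENNReal.ofReal (∑ k ∈ Finset.range N, c' * (a ^ (-ρ) * ((k:ℝ)+1) ^ (-p))) :=
            (ENNReal.ofReal_sum_of_nonneg fun k _ => by positivity).symm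
        _ ≤ ENNReal.ofReal (c' * a ^ (-ρ) * Z) := by
            apply ENNReal.ofReal_le_ofReal
            rw [← Finset.mul_sum, ← Finset.mul_sum, ← mul_assoc]
            exact mul_le_mul_of_nonneg_left
              (hsum.sum_le_tsum _ (fun k _ => by positivity)) (by positivity)
    have hcard : (I.card : ℝ) ≤ 2*(K*T) + 3 := by
      have h1 : I.card = 2*M+1 := by
        rw [hIdef, Int.card_Icc]
        omega
      have h2 : (M:ℝ) ≤ K*T + 1 := by
        have := Nat.ceil_lt_add_one (show (0:ℝ) ≤ K*T by positivity)
        linarith [this.le]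
      rw [h1]
      push_cast
      linarith
    have ha' : a ^ (-ρ) = T ^ (-(β*ρ)) := by
      rw [hadef, ← Real.rpow_mul hT0.le]
      congr 1
      ring
    have hT' : T ^ (1-β*ρ) = T * T^(-(β*ρ)) := by
      rw [show (1-β*ρ) = 1 + -(β*ρ) by ring, Real.rpow_add hT0, Real.rpow_one]
    calc P {ω | ∃ i : ℤ, (|i| : ℝ) ≤ K * T ∧
            ∃ s : ℝ, a ≤ s ∧ s ≤ T ∧ |Λ i s ω - s| > s ^ ((1 : ℝ) / 2 + ε)}
        ≤ P (Gᶜ ∪ ⋃ i ∈ I, ⋃ k ∈ Finset.range N, A i k) := measure_mono hincl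
      _ ≤ P Gᶜ + P (⋃ i ∈ I, ⋃ k ∈ Finset.range N, A i k) := measure_union_le _ _
      _ = P (⋃ i ∈ I, ⋃ k ∈ Finset.range N, A i k) := by rw [hGnull, zero_add]
      _ ≤ ∑ i ∈ I, P (⋃ k ∈ Finset.range N, A i k) := measure_biUnion_finset_le _ _
      _ ≤ ∑ i ∈ I, ENNReal.ofReal (c' * a ^ (-ρ) * Z) :=
          Finset.sum_le_sum fun i hi =>
            le_trans (measure_biUnion_finset_le _ _) (hinner i hi)
      _ = (I.card : ℝ≥0∞) * ENNReal.ofReal (c' * a ^ (-ρ) * Z) := by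
          rw [Finset.sum_const, nsmul_eq_mul]
      _ ≤ ENNReal.ofReal (c' * Z * (2*K * T^(1-β*ρ) + 3 * T^(-(β*ρ)))) := by
          rw [← ENNReal.ofReal_natCast I.card, ← ENNReal.ofReal_mul (Nat.cast_nonneg _)]
          apply ENNReal.ofReal_le_ofReal
          rw [ha', hT']
          calc (I.card:ℝ) * (c' * T^(-(β*ρ)) * Z)
              ≤ (2*(K*T)+3) * (c' * T^(-(β*ρ)) * Z) :=
                mul_le_mul_of_nonneg_right hcard (by positivity)
            _ = c' * Z * (2*K * (T * T^(-(β*ρ))) + 3 * T^(-(β*ρ))) := by ring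
  have hlim : Tendsto (fun T : ℝ =>
      ENNReal.ofReal (c' * Z * (2*K * T^(1-β*ρ) + 3 * T^(-(β*ρ))))) atTop (nhds 0) := by
    have t1 : Tendsto (fun T:ℝ => T ^ (1-β*ρ)) atTop (nhds 0) := by
      have h := tendsto_rpow_neg_atTop (show (0:ℝ) < β*ρ - 1 by linarith)
      simpa [show -(β*ρ-1) = 1 - β*ρ by ring] using h
    have t2 : Tendsto (fun T:ℝ => T ^ (-(β*ρ))) atTop (nhds 0) :=
      tendsto_rpow_neg_atTop (by linarith)
    have t3 := (((t1.const_mul (2*K)).add (t2.const_mul 3)).const_mul (c'*Z))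
    norm_num at t3
    have t4 := ENNReal.tendsto_ofReal t3
    simpa [ENNReal.ofReal_zero] using t4
  exact tendsto_of_tendsto_of_tendsto_of_le_of_le' tendsto_const_nhds hlim
    (Eventually.of_forall fun T => zero_le) hev
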